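/- Let B be a real m×n matrix, λ > 0, and E_ij the m×n single-entry matrix. Then the directional derivative of B ↦ B^‡ := Bᵀ(BBᵀ+λI)⁻¹ in the direction E_ij equals (I − B^‡ B) E_ijᵀ (BBᵀ+λI)⁻¹ − B^‡ E_ij B^‡. -/

import Mathlib

open Matrix


attribute [local instance] Matrix.linftyOpNormedAddCommGroup Matrix.linftyOpNormedSpace Matrix.linftyOpNormedRing Matrix.linftyOpNormedAlgebra

private noncomputable def mulCLM (p q r : ℕ) :
    Matrix (Fin p) (Fin q) ℝ →L[ℝ] Matrix (Fin q) (Fin r) ℝ →L[ℝ] Matrix (Fin p) (Fin r) ℝ :=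
  LinearMap.toContinuousLinearMap
    { toFun := fun A => LinearMap.toContinuousLinearMap
        { toFun := fun C => A * C
          map_add' := fun C D => Matrix.mul_add A C D
          map_smul' := fun c C => (Matrix.mul_smul A c C) }
      map_add' := fun A A' => by
        ext C e f
        simp [Matrix.add_mul]
      map_smul' := fun c A => by
        ext C e f
        simp [Matrix.smul_mul] }

@[simp] private lemma mulCLM_apply (p q r : ℕ) (A : Matrix (Fin p) (Fin q) ℝ)
    (C : Matrix (Fin q) (Fin r) ℝ) : mulCLM p q r A C = A * C := rfl

private lemma hasDerivAt_matmul {p q r : ℕ} {f : ℝ → Matrix (Fin p) (Fin q) ℝ}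
    {g : ℝ → Matrix (Fin q) (Fin r) ℝ} {f' : Matrix (Fin p) (Fin q) ℝ}
    {g' : Matrix (Fin q) (Fin r) ℝ} {x : ℝ} (hf : HasDerivAt f f' x)
    (hg : HasDerivAt g g' x) :
    HasDerivAt (fun y => f y * g y) (f' * g x + f x * g') x := by
  have h1 := ContinuousLinearMap.hasDerivAt_of_bilinear (𝕜 := ℝ) (E := Matrix (Fin p) (Fin q) ℝ)
    (F := Matrix (Fin q) (Fin r) ℝ) (G := Matrix (Fin p) (Fin r) ℝ) (B := by exact mulCLM p q r)
    (u := f) (v := g) (x := x) (fun _ => by exact hf) (fun _ => by exact hg)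
  rw [add_comm]
  exact h1


/-- Directional derivative of the regularised pseudoinverse map
`B ↦ B^‡ := Bᵀ(BBᵀ+λI)⁻¹` in the direction of the single-entry matrix
`E = stdBasisMatrix i j 1`:
it equals `(I - B^‡B) Eᵀ (BBᵀ+λI)⁻¹ - B^‡ E B^‡`. -/
theorem stmt7 (m n : ℕ) (B : Matrix (Fin m) (Fin n) ℝ) (lam : ℝ) (hlam : 0 < lam)
    (i : Fin m) (j : Fin n) :
    ∀ (a : Fin n) (b : Fin m),
      HasDerivAt
        (fun ε : ℝ =>
          ((B + ε • Matrix.single i j (1 : ℝ))ᵀ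
            * ((B + ε • Matrix.single i j (1 : ℝ))
                * (B + ε • Matrix.single i j (1 : ℝ))ᵀ
                + lam • (1 : Matrix (Fin m) (Fin m) ℝ))⁻¹) a b)
        ((((1 - (Bᵀ * (B * Bᵀ + lam • (1 : Matrix (Fin m) (Fin m) ℝ))⁻¹) * B)
            * (Matrix.single i j (1 : ℝ))ᵀ
            * (B * Bᵀ + lam • (1 : Matrix (Fin m) (Fin m) ℝ))⁻¹
          - (Bᵀ * (B * Bᵀ + lam • (1 : Matrix (Fin m) (Fin m) ℝ))⁻¹)
            * Matrix.single i j (1 : ℝ)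
            * (Bᵀ * (B * Bᵀ + lam • (1 : Matrix (Fin m) (Fin m) ℝ))⁻¹)
          : Matrix (Fin n) (Fin m) ℝ) a b))
        0 := by
  intro a b
  set E : Matrix (Fin m) (Fin n) ℝ := Matrix.single i j (1 : ℝ) with hE
  set M : Matrix (Fin m) (Fin m) ℝ := B * Bᵀ + lam • 1 with hM
  -- invertibility of M
  have hMu : IsUnit M := by
    have h1 : (B * Bᵀ).PosSemidef := by
      simpa using Matrix.posSemidef_self_mul_conjTranspose B
    have h2 : (lam • (1 : Matrix (Fin m) (Fin m) ℝ)).PosDef := by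
      rw [Matrix.smul_one_eq_diagonal]
      exact Matrix.PosDef.diagonal (fun _ => hlam)
    exact (Matrix.PosDef.posSemidef_add h1 h2).isUnit
  set S : Matrix (Fin m) (Fin m) ℝ := M⁻¹ with hS
  -- derivative of g ε = B + ε • E
  have hg : HasDerivAt (fun ε : ℝ => B + ε • E) E 0 := by
    have h := ((hasDerivAt_id (0:ℝ)).smul_const E).const_add B
    simp only [id, one_smul] at h
    exact h
  -- transpose as CLM
  have hgT : HasDerivAt (fun ε : ℝ => (B + ε • E)ᵀ) Eᵀ 0 := by
    let T : Matrix (Fin m) (Fin n) ℝ →L[ℝ] Matrix (Fin n) (Fin m) ℝ :=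
      LinearMap.toContinuousLinearMap
        { toFun := fun A => Aᵀ
          map_add' := fun A C => Matrix.transpose_add A C
          map_smul' := fun c A => Matrix.transpose_smul c A }
    exact T.hasFDerivAt.comp_hasDerivAt 0 hg
  -- derivative of M ε
  have hMd : HasDerivAt
      (fun ε : ℝ => (B + ε • E) * (B + ε • E)ᵀ + lam • 1)
      (E * Bᵀ + B * Eᵀ) 0 := by
    have := (hasDerivAt_matmul hg hgT).add_const (lam • (1 : Matrix (Fin m) (Fin m) ℝ))
    simp only [add_zero, zero_smul, Matrix.transpose_add] at this
    exact this
  -- derivative of Ring.inverse (M ε)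
  have hinv : HasDerivAt
      (fun ε : ℝ => Ring.inverse ((B + ε • E) * (B + ε • E)ᵀ + lam • 1))
      (-(S * (E * Bᵀ + B * Eᵀ) * S)) 0 := by
    have hu := hasFDerivAt_ringInverse (𝕜 := ℝ) hMu.unit
    have h0 : ((B + (0:ℝ) • E) * (B + (0:ℝ) • E)ᵀ + lam • (1 : Matrix (Fin m) (Fin m) ℝ)) = M := by
      simp [hM]
    have hueq : (hMu.unit : Matrix (Fin m) (Fin m) ℝ)
        = ((B + (0:ℝ) • E) * (B + (0:ℝ) • E)ᵀ + lam • 1) := by rw [hMu.unit_spec, h0]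
    rw [hueq] at hu
    have hcomp := hu.comp_hasDerivAt 0 hMd
    have hinvcoe : ((hMu.unit⁻¹ : (Matrix (Fin m) (Fin m) ℝ)ˣ) : Matrix (Fin m) (Fin m) ℝ) = S := by
      rw [hS, Matrix.nonsing_inv_eq_ringInverse, ← Ring.inverse_unit hMu.unit, hMu.unit_spec]
    simp [hinvcoe, ContinuousLinearMap.mulLeftRight_apply] at hcomp ⊢
    exact hcomp
  -- rewrite Ring.inverse as ⁻¹
  have hinv' : HasDerivAt
      (fun ε : ℝ => ((B + ε • E) * (B + ε • E)ᵀ + lam • 1)⁻¹)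
      (-(S * (E * Bᵀ + B * Eᵀ) * S)) 0 := by
    convert hinv using 2 with ε
    rw [Matrix.nonsing_inv_eq_ringInverse]
  -- product rule
  have hfull : HasDerivAt
      (fun ε : ℝ => (B + ε • E)ᵀ * ((B + ε • E) * (B + ε • E)ᵀ + lam • 1)⁻¹)
      (Eᵀ * S + Bᵀ * -(S * (E * Bᵀ + B * Eᵀ) * S)) 0 := by
    have := hasDerivAt_matmul hgT hinv'
    simpa [hS, hM] using this
  -- value equality
  have hval : Eᵀ * S + Bᵀ * -(S * (E * Bᵀ + B * Eᵀ) * S)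
      = ((1 - (Bᵀ * S) * B) * Eᵀ * S - (Bᵀ * S) * E * (Bᵀ * S)) := by
    simp only [Matrix.sub_mul, Matrix.mul_sub, Matrix.add_mul, Matrix.mul_add, Matrix.one_mul,
      Matrix.mul_neg, Matrix.neg_mul, Matrix.mul_assoc, sub_eq_add_neg, neg_add]
    abel
  rw [hval] at hfull
  -- entry extraction
  let L : Matrix (Fin n) (Fin m) ℝ →L[ℝ] ℝ :=
    LinearMap.toContinuousLinearMap
      { toFun := fun A => A a b
        map_add' := fun A C => rfl
        map_smul' := fun c A => rfl }
  exact L.hasFDerivAt.comp_hasDerivAt 0 hfull
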